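/- Let F be a reversible cellular automaton and u a word of length n. If the set of consequences Cons_F([u]_0) contains a full horizontal segment of 2n consecutive sites ⟨x+k,t⟩, 0 ≤ k ≤ 2n−1, at some time t ≥ 1, then u is a uniform word (all letters of u are equal). -/

import Mathlib

open Classical

section Prelude

variable {A : Type*}

/-- The shift map on configurations. -/
def shift (x : ℤ → A) : ℤ → A := fun i => x (i + 1)

/-- The cylinder of the word `u` placed at position `p`. -/
def cylAt (u : List A) (p : ℤ) : Set (ℤ → A) :=
  {x | ∀ i : Fin u.length, x (p + ((i : ℕ) : ℤ)) = u.get i}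

/-- The region of consequences of a set of configurations. -/
def consSet (F : (ℤ → A) → (ℤ → A)) (X : Set (ℤ → A)) : Set (ℤ × ℕ) :=
  {q | ∀ x ∈ X, ∀ y ∈ X, F^[q.2] x q.1 = F^[q.2] y q.1}

/-- `F` is a cellular automaton with neighborhood `⟦r,s⟧`. -/
def IsCA (F : (ℤ → A) → (ℤ → A)) (r s : ℤ) : Prop :=
  (∀ x, F (shift x) = shift (F x)) ∧
  (∀ x y : ℤ → A, (∀ i : ℤ, r ≤ i → i ≤ s → x i = y i) → F x 0 = F y 0)

/-- A subshift: a closed shift-invariant set. -/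
def IsSubshift [TopologicalSpace A] (S : Set (ℤ → A)) : Prop :=
  IsClosed S ∧ shift '' S = S

/-- Two configurations agree on the centered window of radius `m`
(Cantor distance `< 2^{-m}`). -/
def close (m : ℕ) (x y : ℤ → A) : Prop := ∀ i : ℤ, |i| ≤ (m : ℤ) → x i = y i

/-- `y` is in the tube of radius `2^{-k}` along `h` around `x`:
for every time `n` the configurations `σ^{h n} ∘ F^n (x)` and `σ^{h n} ∘ F^n (y)`
agree on the window of radius `k`. -/
def tube (F : (ℤ → A) → (ℤ → A)) (h : ℕ → ℤ) (k : ℕ) (x y : ℤ → A) : Prop :=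
  ∀ n : ℕ, ∀ i : ℤ, |i| ≤ (k : ℤ) → F^[n] x (i + h n) = F^[n] y (i + h n)

/-- `x` is an equicontinuous point along `h` relative to `S`. -/
def eqPt (F : (ℤ → A) → (ℤ → A)) (S : Set (ℤ → A)) (h : ℕ → ℤ) (x : ℤ → A) : Prop :=
  ∀ k : ℕ, ∃ m : ℕ, ∀ y ∈ S, close m x y → tube F h k x y

/-- `F` is sensitive along `h` relative to `S`. -/
def sensitive (F : (ℤ → A) → (ℤ → A)) (S : Set (ℤ → A)) (h : ℕ → ℤ) : Prop :=
  ∃ k : ℕ, ∀ m : ℕ, ∀ x ∈ S, ∃ y ∈ S, close m x y ∧ ¬ tube F h k x y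

/-- `F` is right-expansive along `h` relative to `S`. -/
def rightExpansive (F : (ℤ → A) → (ℤ → A)) (S : Set (ℤ → A)) (h : ℕ → ℤ) : Prop :=
  ∃ k : ℕ, ∀ x ∈ S, ∀ y ∈ S, (∃ i : ℤ, 0 ≤ i ∧ x i ≠ y i) →
    ∀ z ∈ S, ¬ (tube F h k x z ∧ tube F h k y z)

/-- `F` is left-expansive along `h` relative to `S`. -/
def leftExpansive (F : (ℤ → A) → (ℤ → A)) (S : Set (ℤ → A)) (h : ℕ → ℤ) : Prop :=
  ∃ k : ℕ, ∀ x ∈ S, ∀ y ∈ S, (∃ i : ℤ, i ≤ 0 ∧ x i ≠ y i) →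
    ∀ z ∈ S, ¬ (tube F h k x z ∧ tube F h k y z)

/-- Curves with bounded variation. -/
def BV (h : ℕ → ℤ) : Prop := ∃ M : ℤ, 0 < M ∧ ∀ n : ℕ, |h (n + 1) - h n| ≤ M

/-- The preorder `h ≾ k` on curves. -/
def precsim (h k : ℕ → ℤ) : Prop := ∃ M : ℤ, 0 < M ∧ ∀ n : ℕ, h n ≤ k n + M

/-- The equivalence `h ∼ k` on curves. -/
def simEq (h k : ℕ → ℤ) : Prop := ∃ M : ℤ, 0 < M ∧ ∀ n : ℕ, k n - M ≤ h n ∧ h n ≤ k n + M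

/-- The word `u` belongs to the language of `S`. -/
def inLang (S : Set (ℤ → A)) (u : List A) : Prop := ∃ x ∈ S, x ∈ cylAt u 0

/-- Transitivity of a subshift, expressed on its language. -/
def transitiveSubshift (S : Set (ℤ → A)) : Prop :=
  ∀ u v : List A, inLang S u → inLang S v → ∃ w : List A, inLang S (u ++ w ++ v)

/-- `u` is a blocking word along `h` for the CA `F` of neighborhood `⟦r,s⟧`,
relative to the subshift `S`. -/
def blockingWord (F : (ℤ → A) → (ℤ → A)) (S : Set (ℤ → A)) (h : ℕ → ℤ) (r s : ℤ)
    (u : List A) : Prop :=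
  inLang S u ∧
  ∃ e : ℕ, 0 < e ∧
    (∀ n : ℕ, |h (n + 1) - h n| + s < (e : ℤ) ∧ |h (n + 1) - h n| - r < (e : ℤ)) ∧
    (e : ℤ) ≤ u.length ∧
    ∃ p : ℤ, {q : ℤ × ℕ | h q.2 ≤ q.1 ∧ q.1 < h q.2 + (e : ℤ)} ⊆ consSet F (S ∩ cylAt u p)

end Prelude

section AuxStmt15

variable {A : Type*}

lemma shift_iter_apply (m : ℕ) : ∀ (y : ℤ → A) (i : ℤ), shift^[m] y i = y (i + m) := by
  induction m with
  | zero => intro y i; simp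
  | succ k ih =>
    intro y i
    rw [Function.iterate_succ_apply, ih]
    show y (i + k + 1) = y (i + (k + 1 : ℕ))
    congr 1; push_cast; ring

lemma iter_comm_shift {F : (ℤ → A) → ℤ → A}
    (hc : ∀ x, F (shift x) = shift (F x)) (t : ℕ) (y : ℤ → A) :
    F^[t] (shift y) = shift (F^[t] y) := by
  induction t generalizing y with
  | zero => rfl
  | succ k ih =>
    rw [Function.iterate_succ_apply, hc, ih, ← Function.iterate_succ_apply]

lemma iter_comm_shift_iter {F : (ℤ → A) → ℤ → A}
    (hc : ∀ x, F (shift x) = shift (F x)) (t m : ℕ) (y : ℤ → A) :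
    F^[t] (shift^[m] y) = shift^[m] (F^[t] y) := by
  induction m generalizing y with
  | zero => rfl
  | succ k ih =>
    rw [Function.iterate_succ_apply, ih, iter_comm_shift hc,
      ← Function.iterate_succ_apply]

end AuxStmt15
/-- for a reversible CA, if the consequences of a word `u` of
length `n` contain `2n` consecutive sites on some row `t ≥ 1`, then `u` is a
uniform word. -/
theorem stmt15 {A : Type*} [Fintype A]
    (F G : (ℤ → A) → (ℤ → A)) (r s r' s' : ℤ)
    (hF : IsCA F r s) (hG : IsCA G r' s')
    (hinv₁ : Function.LeftInverse G F) (hinv₂ : Function.RightInverse G F)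
    (u : List A) (x : ℤ) (t : ℕ) (ht : 1 ≤ t)
    (hcons : ∀ k : ℕ, k ≤ 2 * u.length - 1 →
      (x + (k : ℤ), t) ∈ consSet F (cylAt u 0)) :
    ∀ i j : Fin u.length, u.get i = u.get j := by
  set n := u.length with hnu
  intro i j
  rcases Nat.eq_zero_or_pos n with h0 | hn
  · exact absurd i.isLt (by omega)
  have hnz : (n : ℤ) ≠ 0 := by exact_mod_cast hn.ne'
  have hnpos : (0 : ℤ) < n := by exact_mod_cast hn
  have hmod : ∀ p : ℤ, (p % (n : ℤ)).toNat < n := by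
    intro p
    have h1 : 0 ≤ p % (n : ℤ) := Int.emod_nonneg p hnz
    have h2 : p % (n : ℤ) < n := Int.emod_lt_of_pos p hnpos
    omega
  set c : ℤ → A := fun p => u.get ⟨(p % (n : ℤ)).toNat, hmod p⟩ with hc
  -- c is determined by residues mod n
  have ckey : ∀ p q : ℤ, p % (n : ℤ) = q % (n : ℤ) → c p = c q := by
    intro p q h
    simp only [hc]
    congr 1
    apply Fin.ext
    simp [h]
  have hcper : ∀ p : ℤ, c (p + n) = c p := by
    intro p
    refine ckey _ _ ?_
    rw [show p + (n : ℤ) = p + (n : ℤ) * 1 by ring]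
    exact Int.add_mul_emod_self_left p (n : ℤ) 1
  have hc_cyl : c ∈ cylAt u 0 := by
    intro k
    show c (0 + (k : ℤ)) = u.get k
    simp only [hc]
    congr 1
    apply Fin.ext
    have h1 : (((k : ℕ) : ℤ)) % (n : ℤ) = ((k : ℕ) : ℤ) :=
      Int.emod_eq_of_lt (by positivity) (by exact_mod_cast k.isLt)
    simp [h1]
  set d : ℤ → A := fun p => if p < (n : ℤ) then c p else c (p - 1) with hd
  have hd_cyl : d ∈ cylAt u 0 := by
    intro k
    show d (0 + (k : ℤ)) = u.get k
    have hk : (0 : ℤ) + (k : ℕ) < n := by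
      rw [zero_add]; exact_mod_cast k.isLt
    simp only [hd, if_pos hk]
    exact hc_cyl k
  have hsd_cyl : shift^[n + 1] d ∈ cylAt u 0 := by
    intro k
    show shift^[n + 1] d (0 + (k : ℤ)) = u.get k
    rw [shift_iter_apply]
    have hnlt : ¬ (0 + ((k : ℕ) : ℤ) + ((n + 1 : ℕ) : ℤ) < (n : ℤ)) := by
      push_cast; omega
    simp only [hd, if_neg hnlt]
    have e1 : (0 : ℤ) + (k : ℕ) + ((n + 1 : ℕ) : ℤ) - 1 = (0 + (k : ℕ)) + (n : ℤ) := by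
      push_cast; ring
    rw [e1, hcper]
    exact hc_cyl k
  set v : ℤ → A := F^[t] c with hv
  -- v is n-periodic
  have hshiftc : shift^[n] c = c := by
    funext p
    rw [shift_iter_apply]
    exact hcper p
  have hvper : ∀ p : ℤ, v (p + n) = v p := by
    intro p
    have : shift^[n] v = v := by
      rw [hv, ← iter_comm_shift_iter hF.1, hshiftc]
    conv_rhs => rw [← this]
    rw [shift_iter_apply]
  have hvper' : ∀ (jj : ℤ) (p : ℤ), v (p + jj * n) = v p := by
    intro jj
    induction jj using Int.induction_on with
    | zero => intro p; simp
    | succ k ih =>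
      intro p
      have e : p + ((k : ℤ) + 1) * n = (p + k * n) + n := by ring
      rw [e, hvper, ih]
    | pred k ih =>
      intro p
      have e : p + (-(k : ℤ) - 1) * n + (n : ℤ) = p + (-(k : ℤ)) * n := by ring
      have := hvper (p + (-(k : ℤ) - 1) * n)
      rw [e] at this
      exact this.symm.trans (ih p)
  -- consequences
  have h1 : ∀ k : ℕ, k ≤ 2 * n - 1 → F^[t] d (x + k) = v (x + k) := by
    intro k hk
    exact hcons k hk d hd_cyl c hc_cyl
  have h2 : ∀ k : ℕ, k ≤ 2 * n - 1 → F^[t] d (x + k + ((n + 1 : ℕ) : ℤ)) = v (x + k) := by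
    intro k hk
    have := hcons k hk (shift^[n + 1] d) hsd_cyl c hc_cyl
    rw [iter_comm_shift_iter hF.1, shift_iter_apply] at this
    exact this
  -- one-step equality inside the window
  have step : ∀ k : ℕ, k + 2 ≤ n → v (x + (n : ℤ) + k + 1) = v (x + (n : ℤ) + k) := by
    intro k hk
    have ha := h1 (k + n + 1) (by omega)
    have hb := h2 k (by omega)
    have e1 : x + ((k + n + 1 : ℕ) : ℤ) = x + (k : ℕ) + ((n + 1 : ℕ) : ℤ) := by
      push_cast; ring
    rw [e1] at ha
    have hcc : v (x + (k : ℕ) + ((n + 1 : ℕ) : ℤ)) = v (x + (k : ℕ)) := ha.symm.trans hb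
    have e2 : x + (n : ℤ) + (k : ℕ) + 1 = x + (k : ℕ) + ((n + 1 : ℕ) : ℤ) := by
      push_cast; ring
    have e3 : x + (n : ℤ) + (k : ℕ) = (x + (k : ℕ)) + (1 : ℤ) * n := by push_cast; ring
    rw [e2, hcc, e3, hvper']
  -- v is constant on the window [x+n, x+2n-1]
  have window : ∀ m : ℕ, m + 1 ≤ n → v (x + (n : ℤ) + m) = v (x + (n : ℤ)) := by
    intro m
    induction m with
    | zero => intro _; simp
    | succ k ih =>
      intro hm
      have e : x + (n : ℤ) + ((k + 1 : ℕ) : ℤ) = x + (n : ℤ) + (k : ℕ) + 1 := by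
        push_cast; ring
      rw [e, step k (by omega), ih (by omega)]
  -- v is constant everywhere
  have vconst : ∀ p : ℤ, v p = v (x + (n : ℤ)) := by
    intro p
    set m : ℤ := (p - x - n) % (n : ℤ) with hm
    have hm0 : 0 ≤ m := Int.emod_nonneg _ hnz
    have hm1 : m < n := Int.emod_lt_of_pos _ hnpos
    have hdiv : m + (n : ℤ) * ((p - x - n) / n) = p - x - n := Int.emod_add_mul_ediv _ _
    have e : p = (x + (n : ℤ) + m) + ((p - x - n) / n) * n := by linarith [hdiv]
    have hmn : (m.toNat : ℤ) = m := Int.toNat_of_nonneg hm0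
    have := window m.toNat (by omega)
    rw [e, hvper']
    rw [hmn] at this
    exact this
  -- shift-invariance of v
  have hsv : shift v = v := by
    funext p
    show v (p + 1) = v p
    rw [vconst (p + 1), vconst p]
  -- pull back through G^[t]
  have hGF : ∀ y : ℤ → A, G^[t] (F^[t] y) = y := fun y => hinv₁.iterate t y
  have hcv : c = G^[t] v := by rw [hv, hGF]
  have hsc : shift c = c := by
    rw [hcv, ← iter_comm_shift hG.1, hsv]
  have hcs : ∀ p : ℤ, c (p + 1) = c p := fun p => congrFun hsc p
  have hc0 : ∀ p : ℤ, c p = c 0 := by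
    intro p
    induction p using Int.induction_on with
    | zero => rfl
    | succ k ih => rw [hcs (k : ℤ), ih]
    | pred k ih =>
      have hthis := hcs (-(k : ℤ) - 1)
      have e : -(k : ℤ) - 1 + 1 = -(k : ℤ) := by ring
      rw [e] at hthis
      exact hthis.symm.trans ih
  have hui : ∀ k : Fin n, u.get k = c 0 := by
    intro k
    rw [← hc_cyl k, hc0]
  exact (hui i).trans (hui j).symm
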